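/- Let d = 3, 𝕊 = {{1,2},{2,3},{1,3}} and X = [r] × [s] × [2] for some r, s ∈ ℕ. Then for every consistent family P_𝕊 ∈ 𝒫_𝕊^cons, R(P_𝕊) = 2 max_{A ⊆ [r], B ⊆ [s]} (−p_{AB•} + p_{A•1} + p_{•B1} − p_{••1})_+, where p_{AB•} = P_{{1,2}}(A × B), p_{A•1} = P_{{1,3}}(A × {1}), p_{•B1} = P_{{2,3}}(B × {1}), p_{••1} = P_{{1,3}}([r] × {1}), and y_+ = max(y,0). -/

import Mathlib

open Finset

section Flow

variable {r s : ℕ}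

lemma sum_ite_and_right {n : ℕ} (j : Fin n) (c : ℝ) (P : Prop) [Decidable P] :
    (∑ y : Fin n, if P ∧ y = j then c else 0) = if P then c else 0 := by
  by_cases h : P <;> simp [h]

/-- Residual reachability in the bipartite transportation network. -/
inductive FlowReach (a : Fin r → ℝ) (p m : Fin r → Fin s → ℝ) : Fin r ⊕ Fin s → Prop
  | row (i : Fin r) : (∑ j, m i j) < a i → FlowReach a p m (Sum.inl i)
  | col (i : Fin r) (j : Fin s) : FlowReach a p m (Sum.inl i) → m i j < p i j →
      FlowReach a p m (Sum.inr j)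
  | back (i : Fin r) (j : Fin s) : FlowReach a p m (Sum.inr j) → 0 < m i j →
      FlowReach a p m (Sum.inl i)

/-- Row-feasibility (column constraints are preserved exactly by reroutings). -/
def RowFeas (a : Fin r → ℝ) (p : Fin r → Fin s → ℝ) (m : Fin r → Fin s → ℝ) : Prop :=
  (∀ i j, 0 ≤ m i j) ∧ (∀ i j, m i j ≤ p i j) ∧ (∀ i, ∑ j, m i j ≤ a i)

lemma reroute (a : Fin r → ℝ) (p m : Fin r → Fin s → ℝ) (hm : RowFeas a p m)
    {x} (hx : FlowReach a p m x) :
    ∃ C : ℝ, 0 ≤ C ∧ ∃ δ : ℝ, 0 < δ ∧ ∀ ε : ℝ, 0 < ε → ε ≤ δ →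
      ∃ m' : Fin r → Fin s → ℝ, RowFeas a p m' ∧ (∀ j, ∑ i, m' i j = ∑ i, m i j) ∧
        (∀ i j, |m' i j - m i j| ≤ C * ε) ∧
        (∀ i, x = Sum.inl i → ∑ j, m' i j ≤ a i - ε) ∧
        (∀ j, x = Sum.inr j → ∃ i, (∑ j', m' i j' ≤ a i - ε) ∧ m' i j ≤ p i j - ε) := by
  induction hx with
  | row i h =>
      refine ⟨0, le_refl _, a i - ∑ j, m i j, by linarith, fun ε hε hεδ => ?_⟩
      refine ⟨m, hm, fun _ => rfl, fun i j => by simp, ?_, ?_⟩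
      · rintro i' hi'
        cases hi'
        linarith
      · rintro j hj
        cases hj
  | col i j hreach hcap ih =>
      obtain ⟨C, hC, δ, hδ, H⟩ := ih
      refine ⟨C, hC, min δ ((p i j - m i j) / (C + 1)), ?_, fun ε hε hεδ => ?_⟩
      · exact lt_min hδ (div_pos (by linarith) (by linarith))
      · obtain ⟨m', hm', hcol, hclose, hrow, _⟩ := H ε hε (le_trans hεδ (min_le_left _ _))
        refine ⟨m', hm', hcol, hclose, ?_, ?_⟩
        · rintro i' hi'
          cases hi'
        · rintro j' hj'
          cases hj'
          refine ⟨i, hrow i rfl, ?_⟩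
          have h1 : m' i j - m i j ≤ C * ε := le_trans (le_abs_self _) (hclose i j)
          have h2 : ε ≤ (p i j - m i j) / (C + 1) := le_trans hεδ (min_le_right _ _)
          have h3 : (C + 1) * ε ≤ p i j - m i j := by
            rw [mul_comm]
            exact (le_div_iff₀ (by linarith)).mp h2
          linarith
  | back i j hreach hpos ih =>
      obtain ⟨C, hC, δ, hδ, H⟩ := ih
      refine ⟨C + 1, by linarith, min δ (m i j / (C + 1)), lt_min hδ (by positivity),
        fun ε hε hεδ => ?_⟩
      obtain ⟨m', hm', hcol, hclose, _, hcond⟩ := H ε hε (le_trans hεδ (min_le_left _ _))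
      obtain ⟨i₀, hrow₀, hedge₀⟩ := hcond j rfl
      have hCe : (C + 1) * ε ≤ m i j := by
        have h2 : ε ≤ m i j / (C + 1) := le_trans hεδ (min_le_right _ _)
        rw [mul_comm]
        exact (le_div_iff₀ (by linarith)).mp h2
      have hmij : ε ≤ m' i j := by
        have h1 := (abs_le.mp (hclose i j)).1
        linarith
      by_cases hii : i₀ = i
      · subst hii
        refine ⟨m', hm', hcol, fun i' j' => le_trans (hclose i' j') (by nlinarith), ?_, ?_⟩
        · rintro i' hi'
          cases hi'
          exact hrow₀
        · rintro j' hj'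
          cases hj'
      · -- move ε from (i,j) to (i₀,j)
        refine ⟨fun x y =>
          m' x y + (if x = i₀ ∧ y = j then ε else 0) - (if x = i ∧ y = j then ε else 0),
          ⟨?_, ?_, ?_⟩, ?_, ?_, ?_, ?_⟩
        · intro x y
          rcases hm' with ⟨h0, hp, ha⟩
          have h00 := h0 x y
          dsimp only
          by_cases h1 : x = i₀ ∧ y = j <;> by_cases h2 : x = i ∧ y = j
          · exact absurd (h1.1.symm.trans h2.1) hii
          · rw [if_pos h1, if_neg h2]; linarith
          · rw [if_neg h1, if_pos h2]; obtain ⟨rfl, rfl⟩ := h2; linarith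
          · rw [if_neg h1, if_neg h2]; linarith
        · intro x y
          rcases hm' with ⟨h0, hp, ha⟩
          have hpp := hp x y
          dsimp only
          by_cases h1 : x = i₀ ∧ y = j <;> by_cases h2 : x = i ∧ y = j
          · exact absurd (h1.1.symm.trans h2.1) hii
          · rw [if_pos h1, if_neg h2]; obtain ⟨rfl, rfl⟩ := h1; linarith [hedge₀]
          · rw [if_neg h1, if_pos h2]; linarith
          · rw [if_neg h1, if_neg h2]; linarith
        · intro x
          rcases hm' with ⟨h0, hp, ha⟩
          rw [Finset.sum_sub_distrib, Finset.sum_add_distrib,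
            sum_ite_and_right j ε (x = i₀), sum_ite_and_right j ε (x = i)]
          have haa := ha x
          by_cases h1 : x = i₀ <;> by_cases h2 : x = i
          · exact absurd (h1.symm.trans h2) hii
          · rw [if_pos h1, if_neg h2]; subst h1; linarith [hrow₀]
          · rw [if_neg h1, if_pos h2]; subst h2; linarith
          · rw [if_neg h1, if_neg h2]; linarith
        · intro y
          rw [Finset.sum_sub_distrib, Finset.sum_add_distrib]
          have e1 : (∑ x : Fin r, if x = i₀ ∧ y = j then ε else 0)
              = if y = j then ε else 0 := by
            by_cases h : y = j <;> simp [h]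
          have e2 : (∑ x : Fin r, if x = i ∧ y = j then ε else 0)
              = if y = j then ε else 0 := by
            by_cases h : y = j <;> simp [h]
          rw [e1, e2, hcol y]
          ring
        · intro x y
          have h1 := abs_le.mp (hclose x y)
          dsimp only
          rw [abs_le]
          constructor <;> split_ifs <;> nlinarith [h1.1, h1.2, hε, hC]
        · rintro i' hi'
          cases hi'
          rw [Finset.sum_sub_distrib, Finset.sum_add_distrib,
            sum_ite_and_right j ε (i = i₀), sum_ite_and_right j ε (i = i)]
          have haa := hm'.2.2 i
          rw [if_neg (fun h => hii h.symm), if_pos rfl]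
          linarith
        · rintro j' hj'
          cases hj'

end Flow

lemma flow_exists (a : Fin r → ℝ) (b : Fin s → ℝ) (p : Fin r → Fin s → ℝ)
    (ha : ∀ i, 0 ≤ a i) (hb : ∀ j, 0 ≤ b j) (hp : ∀ i j, 0 ≤ p i j)
    (hab : ∑ i, a i = ∑ j, b j) (D : ℝ)
    (hD : ∀ (A : Finset (Fin r)) (B : Finset (Fin s)),
      (∑ i ∈ A, a i) + (∑ j ∈ B, b j) - (∑ i, a i) - (∑ i ∈ A, ∑ j ∈ B, p i j) ≤ D) :
    ∃ m : Fin r → Fin s → ℝ, (∀ i j, 0 ≤ m i j) ∧ (∀ i j, m i j ≤ p i j) ∧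
      (∀ i, ∑ j, m i j ≤ a i) ∧ (∀ j, ∑ i, m i j ≤ b j) ∧
      (∑ i, a i) - D ≤ ∑ i, ∑ j, m i j := by
  classical
  set K : Set (Fin r → Fin s → ℝ) :=
    {m | (∀ i j, 0 ≤ m i j) ∧ (∀ i j, m i j ≤ p i j) ∧ (∀ i, ∑ j, m i j ≤ a i) ∧
      (∀ j, ∑ i, m i j ≤ b j)} with hKdef
  have h0K : (fun _ _ => (0:ℝ)) ∈ K := by
    refine ⟨fun i j => le_refl _, fun i j => hp i j, fun i => ?_, fun j => ?_⟩
    · simp [ha i]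
    · simp [hb j]
  have capp : ∀ (i : Fin r) (j : Fin s), Continuous (fun m : Fin r → Fin s → ℝ => m i j) :=
    fun i j => (continuous_apply j).comp (continuous_apply i)
  have hsub : K ⊆ Set.Icc (fun _ _ => (0:ℝ)) p := by
    rintro m ⟨h0, hp', _, _⟩
    exact ⟨fun i j => h0 i j, fun i j => hp' i j⟩
  have hKclosed : IsClosed K := by
    have hKeq : K = (⋂ i, ⋂ j, {m : Fin r → Fin s → ℝ | 0 ≤ m i j}) ∩
        ((⋂ i, ⋂ j, {m : Fin r → Fin s → ℝ | m i j ≤ p i j}) ∩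
        ((⋂ i, {m : Fin r → Fin s → ℝ | ∑ j, m i j ≤ a i}) ∩
         (⋂ j, {m : Fin r → Fin s → ℝ | ∑ i, m i j ≤ b j}))) := by
      ext m
      simp only [hKdef, Set.mem_setOf_eq, Set.mem_inter_iff, Set.mem_iInter]
      all_goals tauto
    rw [hKeq]
    refine IsClosed.inter ?_ (IsClosed.inter ?_ (IsClosed.inter ?_ ?_))
    · exact isClosed_iInter fun i => isClosed_iInter fun j =>
        isClosed_le continuous_const (capp i j)
    · exact isClosed_iInter fun i => isClosed_iInter fun j =>
        isClosed_le (capp i j) continuous_const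
    · exact isClosed_iInter fun i =>
        isClosed_le (continuous_finset_sum _ fun j _ => capp i j) continuous_const
    · exact isClosed_iInter fun j =>
        isClosed_le (continuous_finset_sum _ fun i _ => capp i j) continuous_const
  have hKcpt : IsCompact K := (isCompact_Icc).of_isClosed_subset hKclosed hsub
  have hFc : Continuous (fun m : Fin r → Fin s → ℝ => ∑ i, ∑ j, m i j) :=
    continuous_finset_sum _ fun i _ => continuous_finset_sum _ fun j _ => capp i j
  obtain ⟨m, hmK, hmax⟩ := hKcpt.exists_isMaxOn ⟨_, h0K⟩ hFc.continuousOn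
  obtain ⟨hm0, hmp, hma, hmb⟩ := hmK
  have hrf : RowFeas a p m := ⟨hm0, hmp, hma⟩
  have hmax' : ∀ m' ∈ K, (∑ i, ∑ j, m' i j) ≤ ∑ i, ∑ j, m i j := fun m' hm' => hmax hm'
  -- reachable columns are saturated
  have hcolfull : ∀ j, FlowReach a p m (Sum.inr j) → ∑ i, m i j = b j := by
    intro j hreach
    refine le_antisymm (hmb j) (not_lt.mp fun hlt => ?_)
    obtain ⟨C, hC, δ, hδ, H⟩ := reroute a p m hrf hreach
    set ε := min δ (b j - ∑ i, m i j) with hεdef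
    have hε : 0 < ε := lt_min hδ (by linarith)
    obtain ⟨m', ⟨h0', hp', ha'⟩, hcol', _, _, hcond⟩ := H ε hε (min_le_left _ _)
    obtain ⟨i₀, hrow₀, hedge₀⟩ := hcond j rfl
    have hεb : ε ≤ b j - ∑ i, m i j := min_le_right _ _
    set m'' : Fin r → Fin s → ℝ :=
      fun x y => m' x y + (if x = i₀ ∧ y = j then ε else 0) with hm''def
    have hrow'' : ∀ x, ∑ y, m'' x y = (∑ y, m' x y) + (if x = i₀ then ε else 0) := by
      intro x
      rw [Finset.sum_add_distrib, sum_ite_and_right j ε (x = i₀)]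
    have hcol'' : ∀ y, ∑ x, m'' x y = (∑ x, m' x y) + (if y = j then ε else 0) := by
      intro y
      rw [Finset.sum_add_distrib]
      congr 1
      by_cases h : y = j <;> simp [h]
    have hm''K : m'' ∈ K := by
      refine ⟨fun x y => ?_, fun x y => ?_, fun x => ?_, fun y => ?_⟩
      · simp only [hm''def]
        split_ifs <;> [linarith [h0' x y]; linarith [h0' x y]]
      · simp only [hm''def]
        split_ifs with h
        · obtain ⟨rfl, rfl⟩ := h
          linarith [hedge₀]
        · linarith [hp' x y]
      · rw [hrow'' x]
        split_ifs with h
        · subst h; linarith [hrow₀]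
        · linarith [ha' x]
      · rw [hcol'' y, hcol' y]
        split_ifs with h
        · subst h; linarith
        · linarith [hmb y]
    have htot' : (∑ x, ∑ y, m' x y) = ∑ x, ∑ y, m x y := by
      rw [Finset.sum_comm]
      rw [show (∑ y, ∑ x, m' x y) = ∑ y, ∑ x, m x y from Finset.sum_congr rfl
        fun y _ => hcol' y]
      exact Finset.sum_comm
    have htot'' : (∑ x, ∑ y, m'' x y) = (∑ x, ∑ y, m x y) + ε := by
      rw [show (∑ x, ∑ y, m'' x y) = ∑ x, ((∑ y, m' x y) + if x = i₀ then ε else 0) from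
        Finset.sum_congr rfl fun x _ => hrow'' x]
      rw [Finset.sum_add_distrib, Finset.sum_ite_eq' Finset.univ i₀ (fun _ => ε)]
      simp [htot']
    have := hmax' m'' hm''K
    rw [htot''] at this
    linarith
  -- the cut
  set A : Finset (Fin r) := Finset.univ.filter (fun i => FlowReach a p m (Sum.inl i)) with hA
  set Bt : Finset (Fin s) := Finset.univ.filter (fun j => FlowReach a p m (Sum.inr j)) with hBt
  have hmemA : ∀ i, i ∈ A ↔ FlowReach a p m (Sum.inl i) := by
    intro i; simp [hA]
  have hmemB : ∀ j, j ∈ Bt ↔ FlowReach a p m (Sum.inr j) := by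
    intro j; simp [hBt]
  have f1 : ∀ j ∈ Bt, ∑ i, m i j = b j := fun j hj => hcolfull j ((hmemB j).mp hj)
  have f2 : ∀ i ∈ Finset.univ \ A, ∑ j, m i j = a i := by
    intro i hi
    rw [Finset.mem_sdiff] at hi
    refine le_antisymm (hma i) (not_lt.mp fun hlt => hi.2 ((hmemA i).mpr (FlowReach.row i hlt)))
  have f3 : ∀ i ∈ A, ∀ j ∈ Finset.univ \ Bt, m i j = p i j := by
    intro i hi j hj
    rw [Finset.mem_sdiff] at hj
    refine le_antisymm (hmp i j) (not_lt.mp fun hlt => hj.2 ((hmemB j).mpr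
      (FlowReach.col i j ((hmemA i).mp hi) hlt)))
  have f4 : ∀ i ∈ Finset.univ \ A, ∀ j ∈ Bt, m i j = 0 := by
    intro i hi j hj
    rw [Finset.mem_sdiff] at hi
    refine le_antisymm (not_lt.mp fun hlt => hi.2 ((hmemA i).mpr
      (FlowReach.back i j ((hmemB j).mp hj) hlt))) (hm0 i j)
  -- counting
  have hcount : (∑ i, ∑ j, m i j) =
      (∑ i ∈ Finset.univ \ A, a i) + (∑ j ∈ Bt, b j) +
        ∑ i ∈ A, ∑ j ∈ Finset.univ \ Bt, p i j := by
    have e0 : (∑ i, ∑ j, m i j) =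
        (∑ i ∈ Finset.univ \ A, ∑ j, m i j) + ∑ i ∈ A, ∑ j, m i j :=
      (Finset.sum_sdiff A.subset_univ).symm
    have e1 : (∑ i ∈ Finset.univ \ A, ∑ j, m i j) = ∑ i ∈ Finset.univ \ A, a i :=
      Finset.sum_congr rfl f2
    have e2 : ∀ i ∈ A, (∑ j, m i j) =
        (∑ j ∈ Finset.univ \ Bt, p i j) + ∑ j ∈ Bt, m i j := by
      intro i hi
      rw [← Finset.sum_sdiff Bt.subset_univ]
      congr 1
      exact Finset.sum_congr rfl (fun j hj => f3 i hi j hj)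
    have e3 : (∑ i ∈ A, ∑ j ∈ Bt, m i j) = ∑ j ∈ Bt, b j := by
      rw [Finset.sum_comm]
      refine Finset.sum_congr rfl fun j hj => ?_
      have e4 : (∑ i, m i j) = (∑ i ∈ Finset.univ \ A, m i j) + ∑ i ∈ A, m i j :=
        (Finset.sum_sdiff A.subset_univ).symm
      have e5 : (∑ i ∈ Finset.univ \ A, m i j) = 0 :=
        Finset.sum_eq_zero fun i hi => f4 i hi j hj
      rw [f1 j hj] at e4
      linarith
    rw [e0, e1, Finset.sum_congr rfl e2, Finset.sum_add_distrib, e3]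
    ring
  have hfin := hD A (Finset.univ \ Bt)
  have g1 : (∑ i ∈ Finset.univ \ A, a i) = (∑ i, a i) - ∑ i ∈ A, a i := by
    have := Finset.sum_sdiff (f := a) A.subset_univ
    linarith
  have g2 : (∑ j ∈ Bt, b j) = (∑ j, b j) - ∑ j ∈ Finset.univ \ Bt, b j := by
    have := Finset.sum_sdiff (f := b) Bt.subset_univ
    linarith
  refine ⟨m, hm0, hmp, hma, hmb, ?_⟩
  rw [hcount, g1, g2]
  linarith

lemma cert_exists (p12 : Fin r → Fin s → ℝ) (p23 : Fin s → Fin 2 → ℝ) (p13 : Fin r → Fin 2 → ℝ)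
    (h12pos : ∀ i j, 0 ≤ p12 i j) (h23pos : ∀ j k, 0 ≤ p23 j k) (h13pos : ∀ i k, 0 ≤ p13 i k)
    (h12sum : ∑ i, ∑ j, p12 i j = 1) (h13sum : ∑ i, ∑ k, p13 i k = 1)
    (hc1 : ∀ i, ∑ j, p12 i j = ∑ k, p13 i k)
    (hc2 : ∀ j, ∑ i, p12 i j = ∑ k, p23 j k)
    (hc3 : ∀ k, ∑ j, p23 j k = ∑ i, p13 i k)
    (M : ℝ)
    (hM : ∀ (A : Finset (Fin r)) (B : Finset (Fin s)),
      -(∑ i ∈ A, ∑ j ∈ B, p12 i j) + (∑ i ∈ A, p13 i 0) + (∑ j ∈ B, p23 j 0) -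
        (∑ i, p13 i 0) ≤ M) :
    ∃ m0 m1 : Fin r → Fin s → ℝ,
      (∀ i j, 0 ≤ m0 i j) ∧ (∀ i j, 0 ≤ m1 i j) ∧ (∀ i j, m0 i j + m1 i j ≤ p12 i j) ∧
      (∀ i, ∑ j, m0 i j ≤ p13 i 0) ∧ (∀ i, ∑ j, m1 i j ≤ p13 i 1) ∧
      (∀ j, ∑ i, m0 i j ≤ p23 j 0) ∧ (∀ j, ∑ i, m1 i j ≤ p23 j 1) ∧
      1 - 2 * M ≤ (∑ i, ∑ j, m0 i j) + (∑ i, ∑ j, m1 i j) := by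
  have hcons0 : ∑ j, p23 j 0 = ∑ i, p13 i 0 := hc3 0
  have hcons1 : ∑ j, p23 j 1 = ∑ i, p13 i 1 := hc3 1
  have hrow : ∀ i, ∑ j, p12 i j = p13 i 0 + p13 i 1 := by
    intro i; rw [hc1 i, Fin.sum_univ_two]
  have hcol : ∀ j, ∑ i, p12 i j = p23 j 0 + p23 j 1 := by
    intro j; rw [hc2 j, Fin.sum_univ_two]
  have h13split : (∑ i, p13 i 0) + (∑ i, p13 i 1) = 1 := by
    rw [← Finset.sum_add_distrib]
    rw [← h13sum]
    exact Finset.sum_congr rfl fun i _ => (Fin.sum_univ_two (f := fun k => p13 i k)).symm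
  -- first flow
  obtain ⟨m0, hm00, hm0p, hm0row, hm0col, hm0tot⟩ :=
    flow_exists (fun i => p13 i 0) (fun j => p23 j 0) p12
      (fun i => h13pos i 0) (fun j => h23pos j 0) h12pos hcons0.symm M
      (fun A B => by have := hM A B; linarith)
  try dsimp only at hm0row hm0col hm0tot
  -- deficiency bound for the residual problem
  have hD' : ∀ (A : Finset (Fin r)) (B : Finset (Fin s)),
      (∑ i ∈ A, p13 i 1) + (∑ j ∈ B, p23 j 1) - (∑ i, p13 i 1) -
        (∑ i ∈ A, ∑ j ∈ B, (p12 i j - m0 i j)) ≤ M := by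
    intro A B
    have ediff : (∑ i ∈ A, ∑ j ∈ B, (p12 i j - m0 i j))
        = (∑ i ∈ A, ∑ j ∈ B, p12 i j) - ∑ i ∈ A, ∑ j ∈ B, m0 i j := by
      rw [← Finset.sum_sub_distrib]
      exact Finset.sum_congr rfl fun i _ => Finset.sum_sub_distrib _ _
    rw [ediff]
    set Ac := Finset.univ \ A with hAc
    set Bc := Finset.univ \ B with hBc
    -- abbreviations as equalities for linarith
    have e1 : ∑ i ∈ A, p13 i 1 = (∑ i ∈ A, ∑ j, p12 i j) - ∑ i ∈ A, p13 i 0 := by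
      rw [← Finset.sum_sub_distrib]
      exact Finset.sum_congr rfl fun i _ => by linarith [hrow i]
    have e2 : ∑ j ∈ B, p23 j 1 = (∑ j ∈ B, ∑ i, p12 i j) - ∑ j ∈ B, p23 j 0 := by
      rw [← Finset.sum_sub_distrib]
      exact Finset.sum_congr rfl fun j _ => by linarith [hcol j]
    have e3 : (∑ i, p13 i 1) = 1 - ∑ i, p13 i 0 := by linarith
    have e4 : ∑ i ∈ A, ∑ j, p12 i j =
        (∑ i ∈ A, ∑ j ∈ B, p12 i j) + ∑ i ∈ A, ∑ j ∈ Bc, p12 i j := by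
      rw [← Finset.sum_add_distrib]
      refine Finset.sum_congr rfl fun i _ => ?_
      rw [hBc, add_comm]
      exact (Finset.sum_sdiff B.subset_univ).symm
    have e5 : ∑ i, ∑ j, p12 i j =
        (∑ j ∈ B, ∑ i, p12 i j) + ∑ j ∈ Bc, ∑ i, p12 i j := by
      rw [Finset.sum_comm, hBc, add_comm]
      exact (Finset.sum_sdiff B.subset_univ).symm
    have e6 : ∑ j ∈ Bc, ∑ i, p12 i j =
        (∑ i ∈ A, ∑ j ∈ Bc, p12 i j) + ∑ i ∈ Ac, ∑ j ∈ Bc, p12 i j := by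
      rw [Finset.sum_comm, hAc, add_comm]
      exact (Finset.sum_sdiff A.subset_univ).symm
    have e7 : (∑ i ∈ A, ∑ j ∈ B, m0 i j) + (∑ i ∈ Ac, ∑ j ∈ B, m0 i j)
        = ∑ j ∈ B, ∑ i, m0 i j := by
      rw [show (∑ j ∈ B, ∑ i, m0 i j) = ∑ i, ∑ j ∈ B, m0 i j from Finset.sum_comm, hAc,
        add_comm]
      exact Finset.sum_sdiff A.subset_univ
    have e8 : (∑ i ∈ Ac, ∑ j ∈ B, m0 i j) + (∑ i ∈ Ac, ∑ j ∈ Bc, m0 i j)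
        = ∑ i ∈ Ac, ∑ j, m0 i j := by
      rw [← Finset.sum_add_distrib]
      refine Finset.sum_congr rfl fun i _ => ?_
      rw [hBc, add_comm]
      exact Finset.sum_sdiff B.subset_univ
    have e9 : ∑ i ∈ Ac, ∑ j ∈ Bc, m0 i j ≤ ∑ i ∈ Ac, ∑ j ∈ Bc, p12 i j :=
      Finset.sum_le_sum fun i _ => Finset.sum_le_sum fun j _ => hm0p i j
    have e10 : ∑ j ∈ B, ∑ i, m0 i j ≤ ∑ j ∈ B, p23 j 0 :=
      Finset.sum_le_sum fun j _ => hm0col j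
    have e11 : (∑ i ∈ Ac, p13 i 0) - (∑ i ∈ Ac, ∑ j, m0 i j) ≤
        (∑ i, p13 i 0) - ∑ i, ∑ j, m0 i j := by
      rw [← Finset.sum_sub_distrib, ← Finset.sum_sub_distrib]
      refine Finset.sum_le_sum_of_subset_of_nonneg (Finset.subset_univ _) ?_
      intro i _ _
      linarith [hm0row i]
    have e12 : (∑ i ∈ A, p13 i 0) + (∑ i ∈ Ac, p13 i 0) = ∑ i, p13 i 0 := by
      rw [hAc, add_comm]
      exact Finset.sum_sdiff A.subset_univ
    linarith
  -- second flow on residual capacities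
  obtain ⟨m1, hm10, hm1p, hm1row, hm1col, hm1tot⟩ :=
    flow_exists (fun i => p13 i 1) (fun j => p23 j 1) (fun i j => p12 i j - m0 i j)
      (fun i => h13pos i 1) (fun j => h23pos j 1)
      (fun i j => by show 0 ≤ p12 i j - m0 i j; linarith [hm0p i j])
      hcons1.symm M hD'
  try dsimp only at hm1row hm1col hm1tot hm1p
  have hm1p' : ∀ i j, m1 i j ≤ p12 i j - m0 i j := hm1p
  refine ⟨m0, m1, hm00, hm10, fun i j => by linarith [hm1p' i j], hm0row, hm1row,
    hm0col, hm1col, ?_⟩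
  have ht0 := hm0tot
  have ht1 : (∑ i, p13 i 1) - M ≤ ∑ i, ∑ j, m1 i j := hm1tot
  linarith

lemma upper_bound (p12 : Fin r → Fin s → ℝ) (p23 : Fin s → Fin 2 → ℝ) (p13 : Fin r → Fin 2 → ℝ)
    (h12sum : ∑ i, ∑ j, p12 i j = 1) (h23sum : ∑ j, ∑ k, p23 j k = 1)
    (h13sum : ∑ i, ∑ k, p13 i k = 1)
    (m0 m1 : Fin r → Fin s → ℝ) (M : ℝ)
    (hm00 : ∀ i j, 0 ≤ m0 i j) (hm10 : ∀ i j, 0 ≤ m1 i j)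
    (hmp : ∀ i j, m0 i j + m1 i j ≤ p12 i j)
    (hr0 : ∀ i, ∑ j, m0 i j ≤ p13 i 0) (hr1 : ∀ i, ∑ j, m1 i j ≤ p13 i 1)
    (hc0 : ∀ j, ∑ i, m0 i j ≤ p23 j 0) (hc1 : ∀ j, ∑ i, m1 i j ≤ p23 j 1)
    (htot : 1 - 2 * M ≤ (∑ i, ∑ j, m0 i j) + (∑ i, ∑ j, m1 i j))
    (f12 : Fin r → Fin s → ℝ) (f23 : Fin s → Fin 2 → ℝ) (f13 : Fin r → Fin 2 → ℝ)
    (hf12 : ∀ i j, -1 ≤ f12 i j) (hf23 : ∀ j k, -1 ≤ f23 j k) (hf13 : ∀ i k, -1 ≤ f13 i k)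
    (hfs : ∀ i j k, 0 ≤ f12 i j + f23 j k + f13 i k) :
    -(6 * M) ≤ (∑ i, ∑ j, f12 i j * p12 i j) + (∑ j, ∑ k, f23 j k * p23 j k) +
      (∑ i, ∑ k, f13 i k * p13 i k) := by
  -- the key nonnegative quantity
  have key : (0:ℝ) ≤ ∑ i, ∑ j,
      (m0 i j * (f12 i j + f23 j 0 + f13 i 0) + m1 i j * (f12 i j + f23 j 1 + f13 i 1)) :=
    Finset.sum_nonneg fun i _ => Finset.sum_nonneg fun j _ =>
      add_nonneg (mul_nonneg (hm00 i j) (hfs i j 0)) (mul_nonneg (hm10 i j) (hfs i j 1))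
  -- expand
  have expand : (∑ i, ∑ j,
      (m0 i j * (f12 i j + f23 j 0 + f13 i 0) + m1 i j * (f12 i j + f23 j 1 + f13 i 1)))
      = (∑ i, ∑ j, f12 i j * (m0 i j + m1 i j))
        + ((∑ j, f23 j 0 * ∑ i, m0 i j) + (∑ j, f23 j 1 * ∑ i, m1 i j))
        + ((∑ i, f13 i 0 * ∑ j, m0 i j) + (∑ i, f13 i 1 * ∑ j, m1 i j)) := by
    have swap0 : (∑ i, ∑ j, m0 i j * f23 j 0) = ∑ j, f23 j 0 * ∑ i, m0 i j := by
      rw [Finset.sum_comm]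
      exact Finset.sum_congr rfl fun j _ => by
        rw [Finset.mul_sum]
        exact Finset.sum_congr rfl fun i _ => mul_comm _ _
    have swap1 : (∑ i, ∑ j, m1 i j * f23 j 1) = ∑ j, f23 j 1 * ∑ i, m1 i j := by
      rw [Finset.sum_comm]
      exact Finset.sum_congr rfl fun j _ => by
        rw [Finset.mul_sum]
        exact Finset.sum_congr rfl fun i _ => mul_comm _ _
    have row0 : (∑ i, ∑ j, m0 i j * f13 i 0) = ∑ i, f13 i 0 * ∑ j, m0 i j := by
      refine Finset.sum_congr rfl fun i _ => ?_
      rw [Finset.mul_sum]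
      exact Finset.sum_congr rfl fun j _ => mul_comm _ _
    have row1 : (∑ i, ∑ j, m1 i j * f13 i 1) = ∑ i, f13 i 1 * ∑ j, m1 i j := by
      refine Finset.sum_congr rfl fun i _ => ?_
      rw [Finset.mul_sum]
      exact Finset.sum_congr rfl fun j _ => mul_comm _ _
    calc (∑ i, ∑ j,
        (m0 i j * (f12 i j + f23 j 0 + f13 i 0) + m1 i j * (f12 i j + f23 j 1 + f13 i 1)))
        = ∑ i, ∑ j, (f12 i j * (m0 i j + m1 i j) + m0 i j * f23 j 0 + m1 i j * f23 j 1
            + m0 i j * f13 i 0 + m1 i j * f13 i 1) :=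
          Finset.sum_congr rfl fun i _ => Finset.sum_congr rfl fun j _ => by ring
      _ = (∑ i, ∑ j, f12 i j * (m0 i j + m1 i j)) + (∑ i, ∑ j, m0 i j * f23 j 0)
          + (∑ i, ∑ j, m1 i j * f23 j 1) + (∑ i, ∑ j, m0 i j * f13 i 0)
          + (∑ i, ∑ j, m1 i j * f13 i 1) := by
            simp only [Finset.sum_add_distrib]
      _ = _ := by rw [swap0, swap1, row0, row1]; ring
  -- bounds against the p-sums
  have b12 : (∑ i, ∑ j, f12 i j * (m0 i j + m1 i j)) ≤ (∑ i, ∑ j, f12 i j * p12 i j)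
      + (1 - ((∑ i, ∑ j, m0 i j) + (∑ i, ∑ j, m1 i j))) := by
    have hpt : ∀ i j, f12 i j * (m0 i j + m1 i j) - f12 i j * p12 i j
        ≤ p12 i j - (m0 i j + m1 i j) := by
      intro i j
      have h1 : (-1) * (p12 i j - (m0 i j + m1 i j)) ≤ f12 i j * (p12 i j - (m0 i j + m1 i j)) :=
        mul_le_mul_of_nonneg_right (hf12 i j) (by linarith [hmp i j])
      nlinarith [h1]
    have hsum := Finset.sum_le_sum (fun i (_ : i ∈ Finset.univ) =>
      Finset.sum_le_sum (fun j (_ : j ∈ Finset.univ) => hpt i j))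
    rw [show (∑ i, ∑ j, (f12 i j * (m0 i j + m1 i j) - f12 i j * p12 i j))
        = (∑ i, ∑ j, f12 i j * (m0 i j + m1 i j)) - ∑ i, ∑ j, f12 i j * p12 i j by
      rw [← Finset.sum_sub_distrib]
      exact Finset.sum_congr rfl fun i _ => Finset.sum_sub_distrib _ _] at hsum
    rw [show (∑ i, ∑ j, (p12 i j - (m0 i j + m1 i j)))
        = (∑ i, ∑ j, p12 i j) - ((∑ i, ∑ j, m0 i j) + (∑ i, ∑ j, m1 i j)) by
      rw [show ((∑ i, ∑ j, m0 i j) + (∑ i, ∑ j, m1 i j))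
          = ∑ i, ((∑ j, m0 i j) + ∑ j, m1 i j) from (Finset.sum_add_distrib).symm,
        ← Finset.sum_sub_distrib]
      refine Finset.sum_congr rfl fun i _ => ?_
      rw [← Finset.sum_add_distrib, ← Finset.sum_sub_distrib]] at hsum
    rw [h12sum] at hsum
    linarith
  -- generic one-variable margin bound
  have margin : ∀ (g : Fin s → ℝ) (q c : Fin s → ℝ), (∀ j, -1 ≤ g j) → (∀ j, c j ≤ q j) →
      (∑ j, g j * c j) ≤ (∑ j, g j * q j) + ((∑ j, q j) - ∑ j, c j) := by
    intro g q c hg hcq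
    have hpt : ∀ j, g j * c j - g j * q j ≤ q j - c j := by
      intro j
      have h1 : (-1) * (q j - c j) ≤ g j * (q j - c j) :=
        mul_le_mul_of_nonneg_right (hg j) (by linarith [hcq j])
      nlinarith [h1]
    have hsum := Finset.sum_le_sum (fun j (_ : j ∈ Finset.univ) => hpt j)
    rw [Finset.sum_sub_distrib, Finset.sum_sub_distrib] at hsum
    linarith
  have b230 := margin (fun j => f23 j 0) (fun j => p23 j 0) (fun j => ∑ i, m0 i j)
    (fun j => hf23 j 0) hc0
  have b231 := margin (fun j => f23 j 1) (fun j => p23 j 1) (fun j => ∑ i, m1 i j)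
    (fun j => hf23 j 1) hc1
  try dsimp only at b230 b231
  -- margin bound for rows
  have marginr : ∀ (g : Fin r → ℝ) (q c : Fin r → ℝ), (∀ i, -1 ≤ g i) → (∀ i, c i ≤ q i) →
      (∑ i, g i * c i) ≤ (∑ i, g i * q i) + ((∑ i, q i) - ∑ i, c i) := by
    intro g q c hg hcq
    have hpt : ∀ i, g i * c i - g i * q i ≤ q i - c i := by
      intro i
      have h1 : (-1) * (q i - c i) ≤ g i * (q i - c i) :=
        mul_le_mul_of_nonneg_right (hg i) (by linarith [hcq i])
      nlinarith [h1]
    have hsum := Finset.sum_le_sum (fun i (_ : i ∈ Finset.univ) => hpt i)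
    rw [Finset.sum_sub_distrib, Finset.sum_sub_distrib] at hsum
    linarith
  have b130 := marginr (fun i => f13 i 0) (fun i => p13 i 0) (fun i => ∑ j, m0 i j)
    (fun i => hf13 i 0) hr0
  have b131 := marginr (fun i => f13 i 1) (fun i => p13 i 1) (fun i => ∑ j, m1 i j)
    (fun i => hf13 i 1) hr1
  try dsimp only at b130 b131
  -- totals of the column sums of m0/m1
  have t0 : (∑ j, ∑ i, m0 i j) = ∑ i, ∑ j, m0 i j := Finset.sum_comm
  have t1 : (∑ j, ∑ i, m1 i j) = ∑ i, ∑ j, m1 i j := Finset.sum_comm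
  -- probability splits
  have s23 : (∑ j, ∑ k, f23 j k * p23 j k)
      = (∑ j, f23 j 0 * p23 j 0) + ∑ j, f23 j 1 * p23 j 1 := by
    rw [← Finset.sum_add_distrib]
    exact Finset.sum_congr rfl fun j _ => Fin.sum_univ_two (f := fun k => f23 j k * p23 j k)
  have s13 : (∑ i, ∑ k, f13 i k * p13 i k)
      = (∑ i, f13 i 0 * p13 i 0) + ∑ i, f13 i 1 * p13 i 1 := by
    rw [← Finset.sum_add_distrib]
    exact Finset.sum_congr rfl fun i _ => Fin.sum_univ_two (f := fun k => f13 i k * p13 i k)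
  have p23split : (∑ j, p23 j 0) + (∑ j, p23 j 1) = 1 := by
    rw [← Finset.sum_add_distrib, ← h23sum]
    exact Finset.sum_congr rfl fun j _ => (Fin.sum_univ_two (f := fun k => p23 j k)).symm
  have p13split : (∑ i, p13 i 0) + (∑ i, p13 i 1) = 1 := by
    rw [← Finset.sum_add_distrib, ← h13sum]
    exact Finset.sum_congr rfl fun i _ => (Fin.sum_univ_two (f := fun k => p13 i k)).symm
  rw [expand] at key
  rw [s23, s13]
  linarith

lemma witness_value (p12 : Fin r → Fin s → ℝ) (p23 : Fin s → Fin 2 → ℝ) (p13 : Fin r → Fin 2 → ℝ)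
    (h12sum : ∑ i, ∑ j, p12 i j = 1) (h13sum : ∑ i, ∑ k, p13 i k = 1)
    (h23sum : ∑ j, ∑ k, p23 j k = 1)
    (hc1 : ∀ i, ∑ j, p12 i j = ∑ k, p13 i k)
    (hc2 : ∀ j, ∑ i, p12 i j = ∑ k, p23 j k)
    (hc3 : ∀ k, ∑ j, p23 j k = ∑ i, p13 i k)
    (A : Finset (Fin r)) (B : Finset (Fin s)) :
    (∑ i, ∑ j, (if ((i ∈ A) ↔ (j ∈ B)) then (2:ℝ) else -1) * p12 i j)
      + (∑ j, ∑ k, (if ((j ∈ B) ↔ (k = 0)) then (-1:ℝ) else 2) * p23 j k)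
      + (∑ i, ∑ k, (if ((i ∈ A) ↔ (k = 0)) then (-1:ℝ) else 2) * p13 i k)
      = -6 * (-(∑ i ∈ A, ∑ j ∈ B, p12 i j) + (∑ i ∈ A, p13 i 0) + (∑ j ∈ B, p23 j 0) -
          ∑ i, p13 i 0) := by
  classical
  -- inner-sum evaluations for f12
  have helper1 : ∀ i ∈ A, (∑ j, (if ((i ∈ A) ↔ (j ∈ B)) then (2:ℝ) else -1) * p12 i j)
      = 3*(∑ j ∈ B, p12 i j) - ∑ j, p12 i j := by
    intro i hi
    have hpt : ∀ j, (if ((i ∈ A) ↔ (j ∈ B)) then (2:ℝ) else -1) * p12 i j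
        = 3*(if j ∈ B then p12 i j else 0) - p12 i j := by
      intro j
      by_cases hj : j ∈ B
      · rw [if_pos (iff_of_true hi hj), if_pos hj]; ring
      · rw [if_neg (fun h => hj (h.mp hi)), if_neg hj]; ring
    rw [Finset.sum_congr rfl fun j _ => hpt j, Finset.sum_sub_distrib, ← Finset.mul_sum,
      Finset.sum_ite_mem, Finset.univ_inter]
  have helper2 : ∀ i ∈ Finset.univ \ A,
      (∑ j, (if ((i ∈ A) ↔ (j ∈ B)) then (2:ℝ) else -1) * p12 i j)
      = 2*(∑ j, p12 i j) - 3*(∑ j ∈ B, p12 i j) := by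
    intro i hi
    rw [Finset.mem_sdiff] at hi
    have hiA := hi.2
    have hpt : ∀ j, (if ((i ∈ A) ↔ (j ∈ B)) then (2:ℝ) else -1) * p12 i j
        = 2*p12 i j - 3*(if j ∈ B then p12 i j else 0) := by
      intro j
      by_cases hj : j ∈ B
      · rw [if_neg (fun h => hiA (h.mpr hj)), if_pos hj]; ring
      · rw [if_pos (iff_of_false hiA hj), if_neg hj]; ring
    rw [Finset.sum_congr rfl fun j _ => hpt j, Finset.sum_sub_distrib, ← Finset.mul_sum,
      ← Finset.mul_sum, Finset.sum_ite_mem, Finset.univ_inter]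
  have hS12 : (∑ i, ∑ j, (if ((i ∈ A) ↔ (j ∈ B)) then (2:ℝ) else -1) * p12 i j)
      = (2*(∑ i ∈ Finset.univ \ A, ∑ j, p12 i j)
          - 3*(∑ i ∈ Finset.univ \ A, ∑ j ∈ B, p12 i j))
        + (3*(∑ i ∈ A, ∑ j ∈ B, p12 i j) - ∑ i ∈ A, ∑ j, p12 i j) := by
    rw [← Finset.sum_sdiff A.subset_univ]
    congr 1
    · rw [Finset.sum_congr rfl helper2, Finset.sum_sub_distrib, ← Finset.mul_sum,
        ← Finset.mul_sum]
    · rw [Finset.sum_congr rfl helper1, Finset.sum_sub_distrib, ← Finset.mul_sum]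
  -- S13
  have hS13 : (∑ i, ∑ k, (if ((i ∈ A) ↔ (k = 0)) then (-1:ℝ) else 2) * p13 i k)
      = (2*(∑ i ∈ Finset.univ \ A, p13 i 0) - (∑ i ∈ Finset.univ \ A, p13 i 1))
        + (-(∑ i ∈ A, p13 i 0) + 2*(∑ i ∈ A, p13 i 1)) := by
    rw [← Finset.sum_sdiff A.subset_univ]
    congr 1
    · have hpt : ∀ i ∈ Finset.univ \ A,
          (∑ k, (if ((i ∈ A) ↔ (k = 0)) then (-1:ℝ) else 2) * p13 i k)
          = 2*p13 i 0 - p13 i 1 := by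
        intro i hi
        rw [Finset.mem_sdiff] at hi
        have hiA := hi.2
        rw [Fin.sum_univ_two]
        rw [if_neg (fun h => hiA (h.mpr rfl)), if_pos (iff_of_false hiA (by decide))]
        ring
      rw [Finset.sum_congr rfl hpt, Finset.sum_sub_distrib, ← Finset.mul_sum]
    · have hpt : ∀ i ∈ A, (∑ k, (if ((i ∈ A) ↔ (k = 0)) then (-1:ℝ) else 2) * p13 i k)
          = -p13 i 0 + 2*p13 i 1 := by
        intro i hi
        rw [Fin.sum_univ_two]
        rw [if_pos (iff_of_true hi rfl), if_neg (fun h => absurd (h.mp hi) (by decide))]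
        ring
      rw [Finset.sum_congr rfl hpt, Finset.sum_add_distrib, ← Finset.mul_sum,
        ← Finset.sum_neg_distrib]
  -- S23
  have hS23 : (∑ j, ∑ k, (if ((j ∈ B) ↔ (k = 0)) then (-1:ℝ) else 2) * p23 j k)
      = (2*(∑ j ∈ Finset.univ \ B, p23 j 0) - (∑ j ∈ Finset.univ \ B, p23 j 1))
        + (-(∑ j ∈ B, p23 j 0) + 2*(∑ j ∈ B, p23 j 1)) := by
    rw [← Finset.sum_sdiff B.subset_univ]
    congr 1
    · have hpt : ∀ j ∈ Finset.univ \ B,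
          (∑ k, (if ((j ∈ B) ↔ (k = 0)) then (-1:ℝ) else 2) * p23 j k)
          = 2*p23 j 0 - p23 j 1 := by
        intro j hj
        rw [Finset.mem_sdiff] at hj
        have hjB := hj.2
        rw [Fin.sum_univ_two]
        rw [if_neg (fun h => hjB (h.mpr rfl)), if_pos (iff_of_false hjB (by decide))]
        ring
      rw [Finset.sum_congr rfl hpt, Finset.sum_sub_distrib, ← Finset.mul_sum]
    · have hpt : ∀ j ∈ B, (∑ k, (if ((j ∈ B) ↔ (k = 0)) then (-1:ℝ) else 2) * p23 j k)
          = -p23 j 0 + 2*p23 j 1 := by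
        intro j hj
        rw [Fin.sum_univ_two]
        rw [if_pos (iff_of_true hj rfl), if_neg (fun h => absurd (h.mp hj) (by decide))]
        ring
      rw [Finset.sum_congr rfl hpt, Finset.sum_add_distrib, ← Finset.mul_sum,
        ← Finset.sum_neg_distrib]
  -- linear relations between block sums
  have q2 : (∑ i ∈ Finset.univ \ A, ∑ j, p12 i j) + (∑ i ∈ A, ∑ j, p12 i j) = 1 := by
    rw [Finset.sum_sdiff A.subset_univ, h12sum]
  have q3 : (∑ i ∈ Finset.univ \ A, ∑ j ∈ B, p12 i j) + (∑ i ∈ A, ∑ j ∈ B, p12 i j)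
      = ∑ j ∈ B, ∑ i, p12 i j := by
    rw [Finset.sum_sdiff A.subset_univ]
    exact Finset.sum_comm
  have q4 : (∑ j ∈ B, ∑ i, p12 i j) = (∑ j ∈ B, p23 j 0) + ∑ j ∈ B, p23 j 1 := by
    rw [← Finset.sum_add_distrib]
    exact Finset.sum_congr rfl fun j _ => by rw [hc2 j, Fin.sum_univ_two]
  have q5 : (∑ i ∈ A, ∑ j, p12 i j) = (∑ i ∈ A, p13 i 0) + ∑ i ∈ A, p13 i 1 := by
    rw [← Finset.sum_add_distrib]
    exact Finset.sum_congr rfl fun i _ => by rw [hc1 i, Fin.sum_univ_two]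
  have q7a : (∑ i ∈ Finset.univ \ A, p13 i 0) + (∑ i ∈ A, p13 i 0) = ∑ i, p13 i 0 :=
    Finset.sum_sdiff A.subset_univ
  have q7b : (∑ i ∈ Finset.univ \ A, p13 i 1) + (∑ i ∈ A, p13 i 1) = ∑ i, p13 i 1 :=
    Finset.sum_sdiff A.subset_univ
  have q9a : (∑ j ∈ Finset.univ \ B, p23 j 0) + (∑ j ∈ B, p23 j 0) = ∑ j, p23 j 0 :=
    Finset.sum_sdiff B.subset_univ
  have q9b : (∑ j ∈ Finset.univ \ B, p23 j 1) + (∑ j ∈ B, p23 j 1) = ∑ j, p23 j 1 :=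
    Finset.sum_sdiff B.subset_univ
  have q10a : (∑ i, p13 i 0) + (∑ i, p13 i 1) = 1 := by
    rw [← Finset.sum_add_distrib, ← h13sum]
    exact Finset.sum_congr rfl fun i _ => (Fin.sum_univ_two (f := fun k => p13 i k)).symm
  have q10b : (∑ j, p23 j 0) + (∑ j, p23 j 1) = 1 := by
    rw [← Finset.sum_add_distrib, ← h23sum]
    exact Finset.sum_congr rfl fun j _ => (Fin.sum_univ_two (f := fun k => p23 j k)).symm
  have q11 : (∑ j, p23 j 0) = ∑ i, p13 i 0 := hc3 0
  rw [hS12, hS13, hS23]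
  linarith

/-- The family `(P_{{1,2}}, P_{{2,3}}, P_{{1,3}})` of pairwise mass functions on
`[r] × [s] × [u]` consists of probability mass functions. -/
def ProbTriple (r s u : ℕ) (p12 : Fin r → Fin s → ℝ) (p23 : Fin s → Fin u → ℝ)
    (p13 : Fin r → Fin u → ℝ) : Prop :=
  (∀ i j, 0 ≤ p12 i j) ∧ (∀ j k, 0 ≤ p23 j k) ∧ (∀ i k, 0 ≤ p13 i k) ∧
    (∑ i, ∑ j, p12 i j = 1) ∧ (∑ j, ∑ k, p23 j k = 1) ∧ (∑ i, ∑ k, p13 i k = 1)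

/-- Consistency of the family of pairwise margins. -/
def ConsTriple (r s u : ℕ) (p12 : Fin r → Fin s → ℝ) (p23 : Fin s → Fin u → ℝ)
    (p13 : Fin r → Fin u → ℝ) : Prop :=
  (∀ i, ∑ j, p12 i j = ∑ k, p13 i k) ∧
    (∀ j, ∑ i, p12 i j = ∑ k, p23 j k) ∧
    (∀ k, ∑ j, p23 j k = ∑ i, p13 i k)

/-- Compatibility: existence of a joint pmf on `[r] × [s] × [u]` with the given margins. -/
def CompatTriple (r s u : ℕ) (p12 : Fin r → Fin s → ℝ) (p23 : Fin s → Fin u → ℝ)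
    (p13 : Fin r → Fin u → ℝ) : Prop :=
  ∃ q : Fin r → Fin s → Fin u → ℝ,
    (∀ i j k, 0 ≤ q i j k) ∧ (∑ i, ∑ j, ∑ k, q i j k = 1) ∧
      (∀ i j, p12 i j = ∑ k, q i j k) ∧ (∀ j k, p23 j k = ∑ i, q i j k) ∧
      (∀ i k, p13 i k = ∑ j, q i j k)

/-- The incompatibility index `R(P_𝕊)` for `𝕊 = {{1,2},{2,3},{1,3}}`. -/
noncomputable def RTriple (r s u : ℕ) (p12 : Fin r → Fin s → ℝ) (p23 : Fin s → Fin u → ℝ)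
    (p13 : Fin r → Fin u → ℝ) : ℝ :=
  sSup {t | ∃ (f12 : Fin r → Fin s → ℝ) (f23 : Fin s → Fin u → ℝ) (f13 : Fin r → Fin u → ℝ),
    (∀ i j, -1 ≤ f12 i j) ∧ (∀ j k, -1 ≤ f23 j k) ∧ (∀ i k, -1 ≤ f13 i k) ∧
    (∀ i j k, 0 ≤ f12 i j + f23 j k + f13 i k) ∧
    t = -(1 / 3) * ((∑ i, ∑ j, f12 i j * p12 i j) + (∑ j, ∑ k, f23 j k * p23 j k) +
          (∑ i, ∑ k, f13 i k * p13 i k))}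

/-- Theorem: exact incompatibility index on `[r] × [s] × [2]`.
Here the value `1 ∈ [2]` of the third coordinate corresponds to `(0 : Fin 2)`. -/
theorem statement_7 (r s : ℕ) (hr : 0 < r) (hs : 0 < s)
    (p12 : Fin r → Fin s → ℝ) (p23 : Fin s → Fin 2 → ℝ) (p13 : Fin r → Fin 2 → ℝ)
    (hprob : ProbTriple r s 2 p12 p23 p13) (hcons : ConsTriple r s 2 p12 p23 p13) :
    RTriple r s 2 p12 p23 p13 =
      2 * sSup {t | ∃ (A : Finset (Fin r)) (B : Finset (Fin s)),
        t = max (-(∑ i ∈ A, ∑ j ∈ B, p12 i j) + (∑ i ∈ A, p13 i 0) + (∑ j ∈ B, p23 j 0) -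
              ∑ i, p13 i 0) 0} := by
  classical
  obtain ⟨h12pos, h23pos, h13pos, h12sum, h23sum, h13sum⟩ := hprob
  obtain ⟨hcn1, hcn2, hcn3⟩ := hcons
  obtain ⟨AB₀, -, hmax⟩ := Finset.exists_max_image Finset.univ
    (fun AB : Finset (Fin r) × Finset (Fin s) =>
      -(∑ i ∈ AB.1, ∑ j ∈ AB.2, p12 i j) + (∑ i ∈ AB.1, p13 i 0) + (∑ j ∈ AB.2, p23 j 0) -
        ∑ i, p13 i 0)
    ⟨(∅, Finset.univ), Finset.mem_univ _⟩
  obtain ⟨A₀, B₀⟩ := AB₀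
  have hvle : ∀ (A : Finset (Fin r)) (B : Finset (Fin s)),
      -(∑ i ∈ A, ∑ j ∈ B, p12 i j) + (∑ i ∈ A, p13 i 0) + (∑ j ∈ B, p23 j 0) -
        (∑ i, p13 i 0) ≤
      -(∑ i ∈ A₀, ∑ j ∈ B₀, p12 i j) + (∑ i ∈ A₀, p13 i 0) + (∑ j ∈ B₀, p23 j 0) -
        (∑ i, p13 i 0) := fun A B => hmax (A, B) (Finset.mem_univ _)
  set M : ℝ := -(∑ i ∈ A₀, ∑ j ∈ B₀, p12 i j) + (∑ i ∈ A₀, p13 i 0) + (∑ j ∈ B₀, p23 j 0) -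
    (∑ i, p13 i 0) with hMdef
  have hM0 : 0 ≤ M := by
    have h0 := hvle ∅ Finset.univ
    simp only [Finset.sum_empty, neg_zero, zero_add, add_zero] at h0
    rw [hcn3 0] at h0
    linarith
  -- certificate
  obtain ⟨m0, m1, hm00, hm10, hmp, hr0, hr1, hcc0, hcc1, htot⟩ :=
    cert_exists p12 p23 p13 h12pos h23pos h13pos h12sum h13sum hcn1 hcn2 hcn3 M hvle
  -- the witness functions
  set g12 : Fin r → Fin s → ℝ := fun i j => if ((i ∈ A₀) ↔ (j ∈ B₀)) then (2:ℝ) else -1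
    with hg12
  set g23 : Fin s → Fin 2 → ℝ := fun j k => if ((j ∈ B₀) ↔ (k = 0)) then (-1:ℝ) else 2
    with hg23
  set g13 : Fin r → Fin 2 → ℝ := fun i k => if ((i ∈ A₀) ↔ (k = 0)) then (-1:ℝ) else 2
    with hg13
  have hwval : (∑ i, ∑ j, g12 i j * p12 i j) + (∑ j, ∑ k, g23 j k * p23 j k) +
      (∑ i, ∑ k, g13 i k * p13 i k) = -6 * M := by
    rw [hg12, hg23, hg13, hMdef]
    exact witness_value p12 p23 p13 h12sum h13sum h23sum hcn1 hcn2 hcn3 A₀ B₀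
  have hmem : (2*M) ∈ {t | ∃ (f12 : Fin r → Fin s → ℝ) (f23 : Fin s → Fin 2 → ℝ)
      (f13 : Fin r → Fin 2 → ℝ),
      (∀ i j, -1 ≤ f12 i j) ∧ (∀ j k, -1 ≤ f23 j k) ∧ (∀ i k, -1 ≤ f13 i k) ∧
      (∀ i j k, 0 ≤ f12 i j + f23 j k + f13 i k) ∧
      t = -(1 / 3) * ((∑ i, ∑ j, f12 i j * p12 i j) + (∑ j, ∑ k, f23 j k * p23 j k) +
            (∑ i, ∑ k, f13 i k * p13 i k))} := by
    refine ⟨g12, g23, g13, ?_, ?_, ?_, ?_, ?_⟩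
    · intro i j; rw [hg12]; dsimp only; split_ifs <;> norm_num
    · intro j k; rw [hg23]; dsimp only; split_ifs <;> norm_num
    · intro i k; rw [hg13]; dsimp only; split_ifs <;> norm_num
    · intro i j k
      rw [hg12, hg23, hg13]
      dsimp only
      by_cases hi : i ∈ A₀ <;> by_cases hj : j ∈ B₀ <;> by_cases hk : k = 0 <;>
        simp [hi, hj, hk] <;> norm_num
    · rw [hwval]; ring
  have hub : ∀ t ∈ {t | ∃ (f12 : Fin r → Fin s → ℝ) (f23 : Fin s → Fin 2 → ℝ)
      (f13 : Fin r → Fin 2 → ℝ),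
      (∀ i j, -1 ≤ f12 i j) ∧ (∀ j k, -1 ≤ f23 j k) ∧ (∀ i k, -1 ≤ f13 i k) ∧
      (∀ i j k, 0 ≤ f12 i j + f23 j k + f13 i k) ∧
      t = -(1 / 3) * ((∑ i, ∑ j, f12 i j * p12 i j) + (∑ j, ∑ k, f23 j k * p23 j k) +
            (∑ i, ∑ k, f13 i k * p13 i k))}, t ≤ 2*M := by
    rintro t ⟨f12, f23, f13, hf12, hf23, hf13, hfs, rfl⟩
    have hkey := upper_bound p12 p23 p13 h12sum h23sum h13sum m0 m1 M hm00 hm10 hmp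
      hr0 hr1 hcc0 hcc1 htot f12 f23 f13 hf12 hf23 hf13 hfs
    linarith
  have hLHS : RTriple r s 2 p12 p23 p13 = 2*M := by
    unfold RTriple
    exact le_antisymm (csSup_le ⟨2*M, hmem⟩ hub) (le_csSup ⟨2*M, hub⟩ hmem)
  have hTub : ∀ t ∈ {t | ∃ (A : Finset (Fin r)) (B : Finset (Fin s)),
      t = max (-(∑ i ∈ A, ∑ j ∈ B, p12 i j) + (∑ i ∈ A, p13 i 0) + (∑ j ∈ B, p23 j 0) -
            ∑ i, p13 i 0) 0}, t ≤ M := by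
    rintro t ⟨A, B, rfl⟩
    exact max_le (hvle A B) hM0
  have hTmem : M ∈ {t | ∃ (A : Finset (Fin r)) (B : Finset (Fin s)),
      t = max (-(∑ i ∈ A, ∑ j ∈ B, p12 i j) + (∑ i ∈ A, p13 i 0) + (∑ j ∈ B, p23 j 0) -
            ∑ i, p13 i 0) 0} := ⟨A₀, B₀, by rw [← hMdef, max_eq_left hM0]⟩
  have hRHS : sSup {t | ∃ (A : Finset (Fin r)) (B : Finset (Fin s)),
      t = max (-(∑ i ∈ A, ∑ j ∈ B, p12 i j) + (∑ i ∈ A, p13 i 0) + (∑ j ∈ B, p23 j 0) -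
            ∑ i, p13 i 0) 0} = M :=
    le_antisymm (csSup_le ⟨M, hTmem⟩ hTub) (le_csSup ⟨M, hTub⟩ hTmem)
  rw [hLHS, hRHS]
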